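/- For each integer n ≥ 0, the classical Euler number satisfies E_n = Σ_{k=0}^{n} C(n,k) · Σ_{i=0}^{k} (−1)^i · i! · S(k,i) · 2^{k−i}. -/

import Mathlib

open Finset

/-- Stirling numbers of the second kind `S(n,k)`. -/
def stirling : ℕ → ℕ → ℕ
  | 0, 0 => 1
  | 0, _ + 1 => 0
  | _ + 1, 0 => 0
  | n + 1, k + 1 => (k + 1) * stirling n (k + 1) + stirling n k

/-- The classical Euler polynomial `E_n(x)`, defined by the generating function
`2 e^{xt}/(eᵗ+1) = ∑ E_n(x) tⁿ/n!`, i.e. as the `n`-th derivative at `t = 0`. -/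
noncomputable def eulerPoly (n : ℕ) (x : ℝ) : ℝ :=
  iteratedDeriv n (fun t => 2 * Real.exp (x * t) / (Real.exp t + 1)) 0

/-- Auxiliary building block `F i t = e^{it}/(eᵗ+1)^{i+1}`. -/
noncomputable def F (i : ℕ) (t : ℝ) : ℝ := Real.exp (i * t) / (Real.exp t + 1) ^ (i + 1)

/-- Coefficients `c k i = (-1)^i i! S(k,i) · 2`. -/
noncomputable def c (k i : ℕ) : ℝ := (-1) ^ i * i.factorial * stirling k i * 2

/-- `D k` is the claimed `k`-th derivative of `2/(eᵗ+1)`. -/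
noncomputable def D (k : ℕ) (t : ℝ) : ℝ := ∑ i ∈ range (k + 1), c k i * F i t

lemma hne (t : ℝ) : Real.exp t + 1 ≠ 0 := by positivity

lemma stirling_eq_zero : ∀ k i : ℕ, k < i → stirling k i = 0 := by
  intro k
  induction k with
  | zero => intro i h; match i, h with
            | j + 1, _ => rfl
  | succ n ih =>
      intro i h
      match i, h with
      | j + 1, h =>
        have h1 : n < j + 1 := by omega
        have h2 : n < j := by omega
        simp [stirling, ih _ h1, ih _ h2]

lemma c_succ (k m : ℕ) : c (k + 1) (m + 1) = ((m : ℝ) + 1) * c k (m + 1) - ((m : ℝ) + 1) * c k m := by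
  unfold c
  show ((-1 : ℝ)) ^ (m + 1) * (m + 1).factorial * ((m + 1) * stirling k (m + 1) + stirling k m : ℕ) * 2 = _
  push_cast [Nat.factorial_succ, pow_succ]
  ring

lemma shuffle (k : ℕ) (t : ℝ) :
    ∑ i ∈ range (k + 1), c k i * ((i : ℝ) * F i t - ((i : ℝ) + 1) * F (i + 1) t) = D (k + 1) t := by
  unfold D
  rw [Finset.sum_range_succ' (fun j => c (k + 1) j * F j t) (k + 1)]
  have h0 : c (k + 1) 0 * F 0 t = 0 := by simp [c, stirling]
  rw [h0, add_zero]
  have hterm : ∀ m ∈ range (k + 1),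
      c (k + 1) (m + 1) * F (m + 1) t
        = ((m : ℝ) + 1) * c k (m + 1) * F (m + 1) t - ((m : ℝ) + 1) * c k m * F (m + 1) t := by
    intro m _; rw [c_succ]; ring
  rw [Finset.sum_congr rfl hterm, Finset.sum_sub_distrib]
  have hL : ∑ i ∈ range (k + 1), c k i * ((i : ℝ) * F i t - ((i : ℝ) + 1) * F (i + 1) t)
      = (∑ i ∈ range (k + 1), (i : ℝ) * c k i * F i t)
        - ∑ i ∈ range (k + 1), ((i : ℝ) + 1) * c k i * F (i + 1) t := by
    rw [← Finset.sum_sub_distrib]; exact Finset.sum_congr rfl fun i _ => by ring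
  rw [hL]
  congr 1
  rw [Finset.sum_range_succ' (fun i => (i : ℝ) * c k i * F i t) k]
  rw [Finset.sum_range_succ (fun m => ((m : ℝ) + 1) * c k (m + 1) * F (m + 1) t) k]
  have hz : c k (k + 1) = 0 := by simp [c, stirling_eq_zero k (k + 1) (by omega)]
  push_cast
  simp [hz]

lemma hasDerivAt_F (i : ℕ) (t : ℝ) :
    HasDerivAt (F i) ((i : ℝ) * F i t - ((i : ℝ) + 1) * F (i + 1) t) t := by
  have h1 : HasDerivAt (fun t : ℝ => Real.exp (i * t)) ((i : ℝ) * Real.exp (i * t)) t := by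
    simpa [mul_comm] using ((hasDerivAt_id t).const_mul (i : ℝ)).exp
  have h2 : HasDerivAt (fun t : ℝ => (Real.exp t + 1) ^ (i + 1))
      ((((i : ℕ) + 1 : ℕ) : ℝ) * (Real.exp t + 1) ^ i * Real.exp t) t := by
    simpa using ((Real.hasDerivAt_exp t).add_const 1).fun_pow (i + 1)
  have h := h1.fun_div h2 (pow_ne_zero _ (hne t))
  refine h.congr_deriv ?_
  symm
  have hx : Real.exp ((↑(i + 1) : ℝ) * t) = Real.exp ((i : ℝ) * t) * Real.exp t := by
    rw [← Real.exp_add]; push_cast; ring_nf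
  simp only [F, hx]
  push_cast
  field_simp
  ring

lemma hasDerivAt_D (k : ℕ) (t : ℝ) : HasDerivAt (D k) (D (k + 1) t) t := by
  have h := HasDerivAt.fun_sum (fun i (_ : i ∈ range (k + 1)) => (hasDerivAt_F i t).const_mul (c k i))
  rw [shuffle k t] at h
  exact h

lemma cF0 (t : ℝ) : c 0 0 * F 0 t = 2 / (Real.exp t + 1) := by
  simp [c, F, stirling]
  rw [div_eq_mul_inv]

lemma iteratedDeriv_f (n : ℕ) :
    iteratedDeriv n (fun t => 2 * Real.exp (1 / 2 * t) / (Real.exp t + 1)) =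
      fun t => (1 / 2 : ℝ) ^ n *
        (Real.exp (1 / 2 * t) * ∑ k ∈ range (n + 1), (n.choose k : ℝ) * 2 ^ k * D k t) := by
  induction n with
  | zero =>
      funext t
      simp [iteratedDeriv_zero, D, cF0 t]
      field_simp
  | succ n ih =>
      funext t
      rw [iteratedDeriv_succ, ih]
      have hexp : HasDerivAt (fun t : ℝ => Real.exp (1 / 2 * t))
          (Real.exp (1 / 2 * t) * (1 / 2)) t := by
        simpa using ((hasDerivAt_id t).const_mul (1 / 2 : ℝ)).exp
      have hsum : HasDerivAt (fun t => ∑ k ∈ range (n + 1), (n.choose k : ℝ) * 2 ^ k * D k t)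
          (∑ k ∈ range (n + 1), (n.choose k : ℝ) * 2 ^ k * D (k + 1) t) t :=
        HasDerivAt.fun_sum fun k _ => (hasDerivAt_D k t).const_mul _
      have h := (hexp.fun_mul hsum).const_mul ((1 / 2 : ℝ) ^ n)
      rw [h.deriv]
      have key : ∑ j ∈ range (n + 2), ((n + 1).choose j : ℝ) * 2 ^ j * D j t
          = (∑ k ∈ range (n + 1), (n.choose k : ℝ) * 2 ^ k * D k t)
            + 2 * ∑ k ∈ range (n + 1), (n.choose k : ℝ) * 2 ^ k * D (k + 1) t := by
        rw [Finset.sum_range_succ' (fun j => ((n + 1).choose j : ℝ) * 2 ^ j * D j t) (n + 1)]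
        have h1 : ∀ m ∈ range (n + 1), ((n + 1).choose (m + 1) : ℝ) * 2 ^ (m + 1) * D (m + 1) t
            = (n.choose (m + 1) : ℝ) * 2 ^ (m + 1) * D (m + 1) t
              + 2 * ((n.choose m : ℝ) * 2 ^ m * D (m + 1) t) := by
          intro m _
          rw [Nat.choose_succ_succ]
          push_cast
          ring
        rw [Finset.sum_congr rfl h1, Finset.sum_add_distrib, ← Finset.mul_sum]
        have h2 : (∑ m ∈ range (n + 1), (n.choose (m + 1) : ℝ) * 2 ^ (m + 1) * D (m + 1) t)
            + (n.choose 0 : ℝ) * 2 ^ 0 * D 0 t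
            = ∑ k ∈ range (n + 1), (n.choose k : ℝ) * 2 ^ k * D k t := by
          rw [← Finset.sum_range_succ' (fun j => (n.choose j : ℝ) * 2 ^ j * D j t) (n + 1),
            Finset.sum_range_succ]
          simp
        simp only [Nat.choose_zero_right, Nat.cast_one] at h2 ⊢
        linarith
      rw [key]
      ring

theorem eulerNumber_closed_form (n : ℕ) :
    2 ^ n * eulerPoly n (1 / 2) =
      ∑ k ∈ Finset.range (n + 1), (n.choose k : ℝ) *
        ∑ i ∈ Finset.range (k + 1),
          (-1 : ℝ) ^ i * (i.factorial : ℝ) * (stirling k i : ℝ) * 2 ^ (k - i) := by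
  unfold eulerPoly
  rw [iteratedDeriv_f]
  have hexp0 : Real.exp (1 / 2 * (0 : ℝ)) = 1 := by norm_num
  have hcancel : (2 : ℝ) ^ n * (1 / 2 : ℝ) ^ n = 1 := by
    rw [← mul_pow]; norm_num
  have hterm : ∀ k ∈ range (n + 1), (n.choose k : ℝ) * 2 ^ k * D k 0
      = (n.choose k : ℝ) * ∑ i ∈ range (k + 1),
          (-1 : ℝ) ^ i * (i.factorial : ℝ) * (stirling k i : ℝ) * 2 ^ (k - i) := by
    intro k _
    rw [mul_assoc]
    congr 1
    unfold D
    rw [Finset.mul_sum]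
    refine Finset.sum_congr rfl fun i hi => ?_
    have hik : i ≤ k := by simpa [Nat.lt_succ_iff] using hi
    have hF0 : F i 0 = 1 / 2 ^ (i + 1) := by
      simp [F, Real.exp_zero]
      norm_num
    have hpow : (2 : ℝ) ^ (k - i) * 2 ^ (i + 1) = 2 ^ (k + 1) := by
      rw [← pow_add]; congr 1; omega
    rw [hF0]
    unfold c
    have h2 : ((2 : ℝ) ^ (i + 1)) ≠ 0 := pow_ne_zero _ two_ne_zero
    field_simp
    linear_combination (-(stirling k i : ℝ)) * hpow
  simp only []
  rw [Finset.sum_congr rfl hterm, hexp0, one_mul, ← mul_assoc, hcancel, one_mul]
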